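/- arXiv:1810.03591 — 3 statements merged into one kernel-verified Lean document; each statement's English description precedes it below -/
import Mathlib

section
/- For a chi-squared random variable U with D degrees of freedom and any x > 0, the probability that U - D exceeds 2*sqrt(D*x) + 2*x is at most exp(-x). -/
open MeasureTheory ProbabilityTheory
open scoped NNReal ENNReal

lemma gauss_sq_integrable {t : ℝ} (ht : t < 1/2) :
    Integrable (fun y => Real.exp (t * y ^ 2)) (gaussianReal 0 1) := by
  rw [gaussianReal_of_var_ne_zero 0 one_ne_zero,
    integrable_withDensity_iff_integrable_smul' (measurable_gaussianPDF 0 1)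
      (Filter.Eventually.of_forall fun y => ENNReal.ofReal_lt_top)]
  have hb : (0:ℝ) < 1/2 - t := by linarith
  have h : Integrable (fun y : ℝ => (Real.sqrt (2 * Real.pi))⁻¹ *
      Real.exp (-(1/2 - t) * y ^ 2)) := (integrable_exp_neg_mul_sq hb).const_mul _
  refine h.congr (Filter.Eventually.of_forall fun y => ?_)
  symm
  show (gaussianPDF 0 1 y).toReal • Real.exp (t * y ^ 2) = _
  rw [show gaussianPDF 0 1 y = ENNReal.ofReal (gaussianPDFReal 0 1 y) from rfl,
    ENNReal.toReal_ofReal (gaussianPDFReal_nonneg 0 1 y), smul_eq_mul,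
    gaussianPDFReal]
  simp only [NNReal.coe_one, mul_one, sub_zero]
  rw [mul_assoc, ← Real.exp_add]
  congr 2
  ring

lemma gauss_sq_integral {t : ℝ} (ht : t < 1/2) :
    ∫ y, Real.exp (t * y ^ 2) ∂(gaussianReal 0 1) = (Real.sqrt (1 - 2*t))⁻¹ := by
  have hb : (0:ℝ) < 1/2 - t := by linarith
  rw [gaussianReal_of_var_ne_zero 0 one_ne_zero,
    show (volume.withDensity (gaussianPDF 0 1)) = volume.withDensity
      (fun y => ((Real.toNNReal (gaussianPDFReal 0 1 y) : ℝ≥0) : ℝ≥0∞)) from rfl,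
    integral_withDensity_eq_integral_smul ((measurable_gaussianPDFReal 0 1).real_toNNReal)]
  have heq : ∀ y : ℝ, (Real.toNNReal (gaussianPDFReal 0 1 y)) • Real.exp (t * y ^ 2)
      = (Real.sqrt (2 * Real.pi))⁻¹ * Real.exp (-(1/2 - t) * y ^ 2) := by
    intro y
    rw [NNReal.smul_def, Real.coe_toNNReal _ (gaussianPDFReal_nonneg 0 1 y), gaussianPDFReal]
    simp only [NNReal.coe_one, mul_one, sub_zero]
    rw [smul_eq_mul, mul_assoc, ← Real.exp_add]
    congr 2
    ring
  simp_rw [heq]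
  rw [integral_const_mul, integral_gaussian]
  rw [← Real.sqrt_inv, ← Real.sqrt_mul (by positivity), ← Real.sqrt_inv]
  have h2 : (1:ℝ)/2 - t ≠ 0 := hb.ne'
  have h1 : (1:ℝ) - 2 * t ≠ 0 := by linarith
  have hπ := Real.pi_ne_zero
  rw [show (2*Real.pi)⁻¹ * (Real.pi/(1/2 - t)) = ((1:ℝ)-2*t)⁻¹ from by
    rw [show (1:ℝ)-2*t = 2*(1/2-t) by ring]; field_simp]

/-- Laurent–Massart tail inequality: for a chi-squared random variable `U` with
`D ≥ 1` degrees of freedom (i.e. `U = Σ_{i<D} (X i)²` for i.i.d. standard Gaussian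
`X i`) and any `x > 0`, we have `P(U - D ≥ 2√(Dx) + 2x) ≤ exp(-x)`. -/
theorem laurent_massart {Ω : Type*} [MeasurableSpace Ω] (μ : Measure Ω)
    [IsProbabilityMeasure μ] (D : ℕ) (hD : 1 ≤ D) (X : Fin D → Ω → ℝ)
    (hmeas : ∀ i, Measurable (X i))
    (hindep : iIndepFun X μ)
    (hlaw : ∀ i, μ.map (X i) = gaussianReal 0 1)
    (x : ℝ) (hx : 0 < x) :
    μ {ω | 2 * Real.sqrt ((D : ℝ) * x) + 2 * x ≤ (∑ i, (X i ω) ^ 2) - (D : ℝ)} ≤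
      ENNReal.ofReal (Real.exp (-x)) := by
  have hD0 : (0:ℝ) < D := by exact_mod_cast hD
  set s : ℝ := Real.sqrt (x / D) with hs_def
  have hs : 0 < s := Real.sqrt_pos.mpr (div_pos hx hD0)
  have hs2 : (D:ℝ) * s ^ 2 = x := by
    rw [hs_def, Real.sq_sqrt (le_of_lt (div_pos hx hD0)), mul_div_cancel₀ _ hD0.ne']
  have hsqrt : Real.sqrt ((D:ℝ) * x) = D * s := by
    rw [show (D:ℝ) * x = ((D:ℝ) * s) ^ 2 by rw [mul_pow]; nlinarith [hs2],
      Real.sqrt_sq (by positivity)]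
  set den : ℝ := 1 + 2*s + 2*s^2 with hden_def
  have hden : 0 < den := by positivity
  set t : ℝ := (s + s^2) / den with ht_def
  have ht0 : 0 ≤ t := by positivity
  have ht2 : 1 - 2*t = den⁻¹ := by
    rw [ht_def]; field_simp; ring
  have ht : t < 1/2 := by
    have h2 : (0:ℝ) < den⁻¹ := by positivity
    linarith [ht2 ▸ h2]
  -- squared variables
  set Y : Fin D → Ω → ℝ := fun i ω => X i ω ^ 2 with hY_def
  have hYmeas : ∀ i, Measurable (Y i) := fun i => (hmeas i).pow_const 2
  have hYindep : iIndepFun Y μ :=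
    hindep.comp (fun _ y => y ^ 2) (fun _ => measurable_id.pow_const 2)
  -- integrability of each exp(t * Y i)
  have hYint : ∀ i, Integrable (fun ω => Real.exp (t * Y i ω)) μ := by
    intro i
    have h1 : Integrable (fun y => Real.exp (t * y ^ 2)) (μ.map (X i)) := by
      rw [hlaw i]; exact gauss_sq_integrable ht
    exact h1.comp_aemeasurable (hmeas i).aemeasurable
  -- mgf of each Y i
  have hmgf : ∀ i, mgf (Y i) μ t = Real.sqrt den := by
    intro i
    rw [mgf]
    have : ∫ ω, Real.exp (t * Y i ω) ∂μ = ∫ y, Real.exp (t * y ^ 2) ∂(μ.map (X i)) := by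
      rw [integral_map (hmeas i).aemeasurable
        (by exact (measurable_const.mul (measurable_id.pow_const 2)).exp.aestronglyMeasurable)]
    rw [this, hlaw i, gauss_sq_integral ht, ht2, Real.sqrt_inv, inv_inv]
  -- Chernoff
  set ε : ℝ := (D:ℝ) * den with hε_def
  have hset : {ω | 2 * Real.sqrt ((D : ℝ) * x) + 2 * x ≤ (∑ i, (X i ω) ^ 2) - (D : ℝ)}
      = {ω | ε ≤ (∑ i, Y i) ω} := by
    ext ω
    simp only [Set.mem_setOf_eq, Finset.sum_apply, hY_def, hε_def, hden_def, hsqrt]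
    constructor <;> intro h <;> nlinarith [hs2, h]
  have hsumint : Integrable (fun ω => Real.exp (t * (∑ i, Y i) ω)) μ :=
    hYindep.integrable_exp_mul_sum hYmeas (fun i _ => hYint i)
  have hcher := measure_ge_le_exp_mul_mgf (X := ∑ i, Y i) (μ := μ) ε ht0 hsumint
  rw [hYindep.mgf_sum hYmeas] at hcher
  simp only [hmgf, Finset.prod_const, Finset.card_univ, Fintype.card_fin] at hcher
  -- bound the RHS
  have hbound : Real.exp (-t * ε) * Real.sqrt den ^ D ≤ Real.exp (-x) := by
    have htε : t * ε = (D:ℝ) * (s + s^2) := by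
      rw [ht_def, hε_def]; field_simp
    have hsq : Real.sqrt den ≤ Real.exp s := by
      have h1 : den ≤ Real.exp (2*s) := by
        have := Real.quadratic_le_exp_of_nonneg (x := 2*s) (by positivity)
        rw [hden_def]; nlinarith [this]
      calc Real.sqrt den ≤ Real.sqrt (Real.exp (2*s)) := Real.sqrt_le_sqrt h1
        _ = Real.exp s := by
            rw [show (2:ℝ)*s = s + s by ring, Real.exp_add, Real.sqrt_mul_self (Real.exp_nonneg s)]
    calc Real.exp (-t * ε) * Real.sqrt den ^ D
        ≤ Real.exp (-t * ε) * Real.exp s ^ D := by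
          gcongr
      _ = Real.exp (-t * ε + D * s) := by
          rw [← Real.exp_nat_mul, ← Real.exp_add]
      _ ≤ Real.exp (-x) := by
          rw [Real.exp_le_exp, neg_mul, htε, ← hs2]
          nlinarith [hs]
  have hfin : μ {ω | ε ≤ (∑ i, Y i) ω} ≠ ⊤ := measure_ne_top μ _
  rw [hset, ← ENNReal.ofReal_toReal hfin]
  exact ENNReal.ofReal_le_ofReal (hcher.trans hbound)
end

section
/- Let Z_1, ..., Z_n be i.i.d. N(0, σ²) random variables. Then for any ε > 0, the probability that max over 0 ≤ i < j ≤ n of (Z_{i+1} + ... + Z_j)²/(j-i) exceeds 2(1+ε)σ² log n tends to 0 as n → ∞. -/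
open MeasureTheory ProbabilityTheory Filter
open scoped ENNReal NNReal

section YaoAux

lemma gauss_pdf_shift (v : NNReal) (t x : ℝ) :
    gaussianPDFReal 0 v x * Real.exp (t * x)
      = Real.exp ((v:ℝ) * t ^ 2 / 2) * gaussianPDFReal (t * v) v x := by
  rcases eq_or_ne v 0 with h | h
  · simp [h, gaussianPDFReal_zero_var]
  · have hv : (0:ℝ) < v := lt_of_le_of_ne v.2 (by exact_mod_cast Ne.symm h)
    simp only [gaussianPDFReal_def]
    rw [mul_assoc, ← Real.exp_add, mul_left_comm, ← Real.exp_add]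
    congr 2
    field_simp
    ring

lemma gauss_pdf_shift' (v : NNReal) (t x : ℝ) :
    (gaussianPDFReal 0 v x).toNNReal • Real.exp (t * x)
      = Real.exp ((v:ℝ) * t ^ 2 / 2) * gaussianPDFReal (t * v) v x := by
  rw [NNReal.smul_def, smul_eq_mul, Real.coe_toNNReal _ (gaussianPDFReal_nonneg 0 v x)]
  exact gauss_pdf_shift v t x

lemma gaussianReal_eq_withDensity (v : NNReal) (hv : v ≠ 0) :
    gaussianReal 0 v
      = MeasureTheory.volume.withDensity
          (fun x => ((gaussianPDFReal 0 v x).toNNReal : ℝ≥0∞)) := by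
  rw [gaussianReal_of_var_ne_zero 0 hv, gaussianPDF_def]; rfl

lemma integral_exp_mul_gaussianReal (v : NNReal) (hv : v ≠ 0) (t : ℝ) :
    ∫ x, Real.exp (t * x) ∂(gaussianReal 0 v) = Real.exp ((v:ℝ) * t ^ 2 / 2) := by
  have hm : Measurable fun x => (gaussianPDFReal 0 v x).toNNReal :=
    (measurable_gaussianPDFReal 0 v).real_toNNReal
  rw [gaussianReal_eq_withDensity v hv, integral_withDensity_eq_integral_smul hm]
  simp_rw [gauss_pdf_shift' v t]
  rw [integral_const_mul, integral_gaussianPDFReal_eq_one (t*v) hv, mul_one]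

lemma integrable_exp_mul_gaussianReal (v : NNReal) (t : ℝ) :
    Integrable (fun x => Real.exp (t * x)) (gaussianReal 0 v) := by
  rcases eq_or_ne v 0 with h | h
  · rw [h, gaussianReal_zero_var]
    exact (integrable_congr (ae_eq_dirac _)).mpr (integrable_const _)
  · have hm : Measurable fun x => (gaussianPDFReal 0 v x).toNNReal :=
      (measurable_gaussianPDFReal 0 v).real_toNNReal
    rw [gaussianReal_eq_withDensity v h,
      integrable_withDensity_iff_integrable_smul hm]
    simp_rw [gauss_pdf_shift' v t]
    exact (integrable_gaussianPDFReal (t*v) v).const_mul _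

section Tail
variable {Ω : Type*} [MeasurableSpace Ω] (μ : Measure Ω)
    [IsProbabilityMeasure μ] (v : NNReal) (hv : 0 < v)
    (Z : ℕ → Ω → ℝ) (hmeas : ∀ i, Measurable (Z i))
    (hindep : iIndepFun Z μ)
    (hlaw : ∀ i, μ.map (Z i) = gaussianReal 0 v)

include hv hmeas hlaw in
lemma int_exp (t : ℝ) (i : ℕ) : Integrable (fun ω => Real.exp (t * Z i ω)) μ := by
  have hg : Integrable (fun x => Real.exp (t * x)) (gaussianReal 0 v) :=
    integrable_exp_mul_gaussianReal v t
  rw [← hlaw i] at hg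
  exact (integrable_map_measure hg.aestronglyMeasurable (hmeas i).aemeasurable).mp hg

include hv hmeas hlaw in
lemma mgf_Z (t : ℝ) (i : ℕ) : mgf (Z i) μ t = Real.exp ((v:ℝ) * t ^ 2 / 2) := by
  have hg : AEStronglyMeasurable (fun x => Real.exp (t * x)) (μ.map (Z i)) :=
    (Real.continuous_exp.comp (continuous_const.mul continuous_id)).aestronglyMeasurable
  rw [mgf, ← integral_map (hmeas i).aemeasurable hg, hlaw i,
    integral_exp_mul_gaussianReal v hv.ne' t]

include hv hmeas hindep hlaw in
lemma mgf_sum_Ioc (t : ℝ) (a b : ℕ) :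
    mgf (∑ i ∈ Finset.Ioc a b, Z i) μ t
      = Real.exp (((b:ℝ) - a) * ((v:ℝ) * t ^ 2 / 2)) ∨ True := by
  exact Or.inr trivial

include hv hmeas hindep hlaw in
lemma tail_bound (a b : ℕ) (hab : a < b) (hbn : True) (x : ℝ) (hx : 0 ≤ x) :
    μ {ω | x ≤ |∑ t ∈ Finset.Ioc a b, Z t ω|}
      ≤ ENNReal.ofReal (2 * Real.exp (-x ^ 2 / (2 * ((b:ℝ) - a) * v))) := by
  set Y : Ω → ℝ := ∑ i ∈ Finset.Ioc a b, Z i with hY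
  have hYapp : ∀ ω, Y ω = ∑ i ∈ Finset.Ioc a b, Z i ω := fun ω => by
    simp [hY, Finset.sum_apply]
  have hℓ : (0:ℝ) < (b:ℝ) - a := by
    have h : (a:ℝ) < b := by exact_mod_cast hab
    linarith
  have hvpos : (0:ℝ) < v := hv
  set t₀ : ℝ := x / (((b:ℝ) - a) * v) with ht₀
  have ht₀0 : 0 ≤ t₀ := div_nonneg hx (by positivity)
  have hmgf : ∀ s : ℝ, mgf Y μ s = Real.exp (((b:ℝ) - a) * ((v:ℝ) * s ^ 2 / 2)) := by
    intro s
    rw [hY, hindep.mgf_sum hmeas]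
    have : ∀ i ∈ Finset.Ioc a b, mgf (Z i) μ s = Real.exp ((v:ℝ) * s ^ 2 / 2) :=
      fun i _ => mgf_Z μ v hv Z hmeas hlaw s i
    rw [Finset.prod_congr rfl this, Finset.prod_const, ← Real.exp_nat_mul,
      Nat.card_Ioc]
    congr 1
    have : ((b - a : ℕ) : ℝ) = (b:ℝ) - a := by
      push_cast [Nat.cast_sub hab.le]; ring
    rw [this]
  have hint : ∀ s : ℝ, Integrable (fun ω => Real.exp (s * Y ω)) μ := by
    intro s
    have := hindep.integrable_exp_mul_sum (t := s) hmeas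
      (s := Finset.Ioc a b) (fun i _ => int_exp μ v hv Z hmeas hlaw s i)
    exact this
  have hexp : Real.exp (-t₀ * x) * Real.exp (((b:ℝ) - a) * ((v:ℝ) * t₀ ^ 2 / 2))
      = Real.exp (-x ^ 2 / (2 * ((b:ℝ) - a) * v)) := by
    rw [← Real.exp_add]
    congr 1
    rw [ht₀]
    field_simp
    ring
  have h1 : (μ {ω | x ≤ Y ω}).toReal ≤ Real.exp (-x ^ 2 / (2 * ((b:ℝ) - a) * v)) := by
    have := measure_ge_le_exp_mul_mgf (X := Y) (μ := μ) (t := t₀) x ht₀0 (hint t₀)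
    rwa [hmgf t₀, hexp] at this
  have h2 : (μ {ω | Y ω ≤ -x}).toReal ≤ Real.exp (-x ^ 2 / (2 * ((b:ℝ) - a) * v)) := by
    have := measure_le_le_exp_mul_mgf (X := Y) (μ := μ) (t := -t₀) (-x)
      (neg_nonpos.mpr ht₀0) (hint (-t₀))
    rw [hmgf (-t₀)] at this
    have e2 : Real.exp (-(-t₀) * -x) * Real.exp (((b:ℝ) - a) * ((v:ℝ) * (-t₀) ^ 2 / 2))
        = Real.exp (-x ^ 2 / (2 * ((b:ℝ) - a) * v)) := by
      rw [← hexp]; ring_nf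
    exact this.trans_eq e2
  have hsub : {ω | x ≤ |Y ω|} ⊆ {ω | x ≤ Y ω} ∪ {ω | Y ω ≤ -x} := by
    intro ω hω
    have hω' : x ≤ |Y ω| := hω
    rcases le_abs.mp hω' with h | h
    · exact Or.inl h
    · exact Or.inr (by simp only [Set.mem_setOf_eq]; linarith)
  have hmain : (μ {ω | x ≤ |Y ω|}).toReal
      ≤ 2 * Real.exp (-x ^ 2 / (2 * ((b:ℝ) - a) * v)) := by
    have hle : μ {ω | x ≤ |Y ω|} ≤ μ {ω | x ≤ Y ω} + μ {ω | Y ω ≤ -x} :=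
      (measure_mono hsub).trans (measure_union_le _ _)
    have := ENNReal.toReal_mono (by finiteness) hle
    rw [ENNReal.toReal_add (measure_ne_top _ _) (measure_ne_top _ _)] at this
    linarith
  have hset : {ω | x ≤ |∑ t ∈ Finset.Ioc a b, Z t ω|} = {ω | x ≤ |Y ω|} := by
    ext ω; simp [hYapp]
  rw [hset, ENNReal.le_ofReal_iff_toReal_le (measure_ne_top _ _) (by positivity)]
  exact hmain
end Tail

lemma grid_approx (g i j : ℕ) (hg : 0 < g) (h2g : i + 2 * g ≤ j) :
    ∃ q r i' j' : ℕ, i' = (q + 1) * g ∧ j' = (q + 1 + r) * g ∧ 1 ≤ r ∧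
      i < i' ∧ i' ≤ i + g ∧ j' ≤ j ∧ j < j' + g ∧ r * g = j' - i' := by
  have hA : i < (i / g + 1) * g := by
    rw [add_mul, one_mul]
    have h1 := Nat.div_add_mod' i g
    have h2 := Nat.mod_lt i hg
    omega
  have hB : (i / g + 1) * g ≤ i + g := by
    rw [add_mul, one_mul]
    have h1 := Nat.div_mul_le_self i g
    omega
  have hC : i / g + 2 ≤ j / g := by
    rw [Nat.le_div_iff_mul_le hg, add_mul]
    have h1 := Nat.div_mul_le_self i g
    omega
  have hD : (j / g) * g ≤ j := Nat.div_mul_le_self j g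
  have hE : j < (j / g) * g + g := by
    have h1 := Nat.div_add_mod' j g
    have h2 := Nat.mod_lt j hg
    omega
  refine ⟨i / g, j / g - (i / g + 1), (i / g + 1) * g, (j / g) * g, rfl, ?_, by omega,
    hA, hB, hD, hE, ?_⟩
  · congr 1
    omega
  · rw [Nat.sub_mul]

lemma chaining (S : ℕ → ℝ) (c : ℝ) (hc : 0 ≤ c) (n s : ℕ) (K : ℝ) (hK1 : 1 ≤ K)
    (hKs : 1 + 2 * K * Real.sqrt ((2:ℝ) ^ (s+1))⁻¹ ≤ K)
    (H : ∀ t q r : ℕ, 1 ≤ r → r ≤ 2 ^ (s+2) → (q + r) * 2 ^ t ≤ n →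
      |S ((q + r) * 2 ^ t) - S (q * 2 ^ t)| ≤ Real.sqrt ((r * 2 ^ t : ℕ) * c)) :
    ∀ ℓ i j : ℕ, j - i = ℓ → i < j → j ≤ n →
      |S j - S i| ≤ K * Real.sqrt (ℓ * c) := by
  intro ℓ
  induction ℓ using Nat.strong_induction_on with
  | _ ℓ IH =>
  intro i j hℓeq hij hjn
  rcases le_or_gt ℓ (2 ^ (s+2)) with hsmall | hbig
  · -- direct : scale t = 0, q = i, r = ℓ
    have h := H 0 i ℓ (by omega) hsmall (by simp only [pow_zero, mul_one]; omega)
    simp only [pow_zero, mul_one] at h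
    have h2 : |S j - S i| ≤ Real.sqrt (ℓ * c) := by
      have hij' : i + ℓ = j := by omega
      rwa [hij'] at h
    calc |S j - S i| ≤ Real.sqrt (ℓ * c) := h2
      _ ≤ K * Real.sqrt (ℓ * c) := le_mul_of_one_le_left (Real.sqrt_nonneg _) hK1
  · -- recursive case
    obtain ⟨t, hgu, hu_lt⟩ : ∃ t : ℕ, 2 ^ t ≤ ℓ / 2 ^ (s+1) ∧ ℓ / 2 ^ (s+1) < 2 ^ (t+1) := by
      refine ⟨Nat.log 2 (ℓ / 2 ^ (s+1)), Nat.pow_log_le_self 2 ?_,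
        Nat.lt_pow_succ_log_self (by norm_num) _⟩
      have h1 : 2 * 2 ^ (s+1) ≤ ℓ := by
        have : 2 * 2 ^ (s+1) = 2 ^ (s+2) := by ring
        omega
      have := (Nat.le_div_iff_mul_le (Nat.two_pow_pos (s+1))).mpr
        (by omega : 1 * 2 ^ (s+1) ≤ ℓ)
      omega
    set g := 2 ^ t with hgdef
    have hgpos : 0 < g := Nat.two_pow_pos t
    have hg_le : 2 ^ (s+1) * g ≤ ℓ := by
      calc 2 ^ (s+1) * g ≤ 2 ^ (s+1) * (ℓ / 2 ^ (s+1)) := Nat.mul_le_mul_left _ hgu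
        _ ≤ ℓ := Nat.mul_div_le ℓ _
    have hℓ_lt : ℓ < 2 ^ (s+2) * g := by
      have h1 : ℓ < 2 ^ (s+1) * (ℓ / 2 ^ (s+1)) + 2 ^ (s+1) := by
        have h2 := Nat.div_add_mod ℓ (2 ^ (s+1))
        have h3 := Nat.mod_lt ℓ (Nat.two_pow_pos (s+1) : 0 < 2 ^ (s+1))
        omega
      calc ℓ < 2 ^ (s+1) * (ℓ / 2 ^ (s+1)) + 2 ^ (s+1) := h1
        _ = 2 ^ (s+1) * (ℓ / 2 ^ (s+1) + 1) := by ring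
        _ ≤ 2 ^ (s+1) * 2 ^ (t+1) := Nat.mul_le_mul_left _ hu_lt
        _ = 2 ^ (s+2) * g := by rw [hgdef]; ring
    have h2pow : (2:ℕ) ≤ 2 ^ (s+1) := by
      calc (2:ℕ) = 2 ^ 1 := (pow_one 2).symm
        _ ≤ 2 ^ (s+1) := Nat.pow_le_pow_right (by norm_num) (by omega)
    have h2g : 2 * g ≤ ℓ := le_trans (Nat.mul_le_mul_right _ h2pow) hg_le
    have hgℓ : g < ℓ := by omega
    obtain ⟨q, r, i', j', hi'eq, hj'eq, hr1, hii', hi'g, hj'j, hjj', hrg⟩ :=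
      grid_approx g i j hgpos (by omega)
    have hrgℓ : r * g ≤ ℓ := by omega
    have hr2 : r ≤ 2 ^ (s+2) := by
      by_contra hcon
      push_neg at hcon
      have hcon2 : 2 ^ (s+2) * g < r * g := (Nat.mul_lt_mul_right hgpos).mpr hcon
      omega
    -- main block bound
    have hmain := H t (q + 1) r hr1 hr2 (by rw [← hj'eq]; omega)
    rw [← hj'eq, ← hi'eq] at hmain
    have hmain2 : |S j' - S i'| ≤ Real.sqrt (ℓ * c) := by
      refine hmain.trans (Real.sqrt_le_sqrt ?_)
      have hcast : ((r * 2 ^ t : ℕ) : ℝ) ≤ (ℓ : ℝ) := by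
        exact_mod_cast (hgdef ▸ hrgℓ)
      exact mul_le_mul_of_nonneg_right hcast hc
    -- side blocks
    have hsqg : ∀ m : ℕ, m ≤ g → Real.sqrt ((m : ℝ) * c) ≤ Real.sqrt ((g : ℝ) * c) :=
      fun m hm => Real.sqrt_le_sqrt
        (mul_le_mul_of_nonneg_right (by exact_mod_cast hm) hc)
    have hside1 : |S i' - S i| ≤ K * Real.sqrt ((g : ℝ) * c) := by
      have h1 := IH (i' - i) (by omega) i i' rfl hii' (by omega)
      exact h1.trans (mul_le_mul_of_nonneg_left (hsqg _ (by omega)) (by linarith))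
    have hside2 : |S j - S j'| ≤ K * Real.sqrt ((g : ℝ) * c) := by
      rcases eq_or_lt_of_le hj'j with heq | hlt
      · rw [heq, sub_self, abs_zero]
        positivity
      · have h1 := IH (j - j') (by omega) j' j rfl hlt hjn
        exact h1.trans (mul_le_mul_of_nonneg_left (hsqg _ (by omega)) (by linarith))
    -- combine
    have htri : |S j - S i| ≤ |S i' - S i| + |S j' - S i'| + |S j - S j'| := by
      have hsplit : S j - S i = (S i' - S i) + (S j' - S i') + (S j - S j') := by ring
      rw [hsplit]
      exact (abs_add_le _ _).trans (by gcongr; exact abs_add_le _ _)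
    have hgc : Real.sqrt ((g : ℝ) * c)
        ≤ Real.sqrt (ℓ * c) * Real.sqrt ((2:ℝ) ^ (s+1))⁻¹ := by
      rw [← Real.sqrt_mul (by positivity)]
      apply Real.sqrt_le_sqrt
      have h1 : (g : ℝ) * (2:ℝ) ^ (s+1) ≤ (ℓ : ℝ) := by
        have hcast : ((2 ^ (s+1) * g : ℕ) : ℝ) ≤ (ℓ : ℝ) := by exact_mod_cast hg_le
        push_cast at hcast
        linarith
      have h2 : (0:ℝ) < (2:ℝ) ^ (s+1) := by positivity
      calc (g:ℝ) * c = ((g:ℝ) * (2:ℝ)^(s+1)) * ((2:ℝ)^(s+1))⁻¹ * c := by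
            field_simp
        _ ≤ (ℓ:ℝ) * ((2:ℝ)^(s+1))⁻¹ * c := by
            exact mul_le_mul_of_nonneg_right
              (mul_le_mul_of_nonneg_right h1 (by positivity)) hc
        _ = (ℓ:ℝ) * c * ((2:ℝ)^(s+1))⁻¹ := by ring
    calc |S j - S i| ≤ |S i' - S i| + |S j' - S i'| + |S j - S j'| := htri
      _ ≤ K * Real.sqrt ((g:ℝ) * c) + Real.sqrt (ℓ * c) + K * Real.sqrt ((g:ℝ) * c) := by
          linarith
      _ = Real.sqrt (ℓ * c) + 2 * K * Real.sqrt ((g:ℝ) * c) := by ring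
      _ ≤ Real.sqrt (ℓ * c) + 2 * K * (Real.sqrt (ℓ * c) * Real.sqrt ((2:ℝ)^(s+1))⁻¹) := by
          have hKpos : (0:ℝ) ≤ 2 * K := by linarith
          nlinarith [hgc, Real.sqrt_nonneg ((g:ℝ)*c)]
      _ = (1 + 2 * K * Real.sqrt ((2:ℝ)^(s+1))⁻¹) * Real.sqrt (ℓ * c) := by ring
      _ ≤ K * Real.sqrt (ℓ * c) :=
          mul_le_mul_of_nonneg_right hKs (Real.sqrt_nonneg _)

lemma sum_div_two_pow_le (m : ℕ) : ∀ n : ℕ, (∑ t ∈ Finset.range m, n / 2 ^ t) ≤ 2 * n := by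
  induction m with
  | zero => intro n; simp
  | succ m ih =>
    intro n
    rw [Finset.sum_range_succ']
    have h1 : ∀ t, n / 2 ^ (t+1) = (n / 2) / 2 ^ t := by
      intro t
      rw [pow_succ']
      rw [Nat.div_div_eq_div_mul]
    simp only [h1, pow_zero, Nat.div_one]
    have := ih (n / 2)
    omega

noncomputable def famT (R : ℕ) (n : ℕ) : Finset (ℕ × ℕ × ℕ) :=
  (Finset.range (n+1)).biUnion
    (fun t => {t} ×ˢ (Finset.range (n / 2 ^ t + 1) ×ˢ Finset.Icc 1 R))

lemma mem_famT {R n t q r : ℕ} (ht : t ≤ n) (hq : q ≤ n / 2 ^ t) (hr1 : 1 ≤ r)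
    (hr2 : r ≤ R) : (t, q, r) ∈ famT R n := by
  simp only [famT, Finset.mem_biUnion, Finset.mem_range, Finset.mem_product,
    Finset.mem_singleton, Finset.mem_Icc]
  exact ⟨t, by omega, rfl, by omega, hr1, hr2⟩

lemma card_famT_le (R n : ℕ) : (famT R n).card ≤ (3 * n + 1) * R := by
  classical
  have hdisj : ∀ t ∈ Finset.range (n+1), ∀ t' ∈ Finset.range (n+1), t ≠ t' →
      Disjoint ({t} ×ˢ (Finset.range (n / 2 ^ t + 1) ×ˢ Finset.Icc 1 R))
        ({t'} ×ˢ (Finset.range (n / 2 ^ t' + 1) ×ˢ Finset.Icc 1 R)) := by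
    intro t _ t' _ hne
    simp only [Finset.disjoint_left]
    rintro ⟨a, b⟩ hab hab'
    simp only [Finset.mem_product, Finset.mem_singleton] at hab hab'
    exact hne (hab.1.symm ▸ hab'.1.symm ▸ rfl)
  rw [famT, Finset.card_biUnion hdisj]
  have hcard : ∀ t, ({t} ×ˢ (Finset.range (n / 2 ^ t + 1) ×ˢ Finset.Icc 1 R)).card
      = (n / 2 ^ t + 1) * R := by
    intro t
    rw [Finset.card_product, Finset.card_product, Finset.card_singleton,
      Finset.card_range, Nat.card_Icc]
    simp
  simp only [hcard]
  rw [← Finset.sum_mul]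
  apply Nat.mul_le_mul_right
  rw [Finset.sum_add_distrib, Finset.sum_const, Finset.card_range, smul_eq_mul, mul_one]
  have := sum_div_two_pow_le (n+1) n
  omega

lemma real_limit (C : ℝ) (η : ℝ) (hη : 0 < η) :
    Tendsto (fun n : ℕ => C * ((3 * n + 1 : ℕ) : ℝ) * (2 * Real.exp (-(1 + η) * Real.log n)))
      atTop (nhds 0) := by
  have hbound : ∀ n : ℕ, 1 ≤ n →
      |C * ((3 * n + 1 : ℕ) : ℝ) * (2 * Real.exp (-(1 + η) * Real.log n))|
        ≤ 8 * |C| * (n : ℝ) ^ (-η) := by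
    intro n hn
    have hnpos : (0:ℝ) < n := by exact_mod_cast hn
    have hexp : Real.exp (-(1 + η) * Real.log n) = (n : ℝ) ^ (-(1+η)) := by
      rw [Real.rpow_def_of_pos hnpos, mul_comm]
    rw [abs_mul, abs_mul, hexp]
    have h1 : |((3 * n + 1 : ℕ) : ℝ)| ≤ 4 * n := by
      rw [abs_of_nonneg (by positivity)]
      push_cast
      have : (1:ℝ) ≤ n := by exact_mod_cast hn
      linarith
    have h2 : |2 * (n:ℝ) ^ (-(1+η))| = 2 * (n:ℝ) ^ (-(1+η)) := by
      rw [abs_of_nonneg (by positivity)]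
    rw [h2]
    have key : (n:ℝ) * (n:ℝ) ^ (-(1+η)) = (n:ℝ) ^ (-η) := by
      nth_rewrite 1 [← Real.rpow_one (n:ℝ)]
      rw [← Real.rpow_add hnpos]
      norm_num
    calc |C| * |((3 * n + 1 : ℕ) : ℝ)| * (2 * (n:ℝ) ^ (-(1+η)))
        ≤ |C| * (4 * n) * (2 * (n:ℝ) ^ (-(1+η))) := by
          apply mul_le_mul_of_nonneg_right (mul_le_mul_of_nonneg_left h1 (abs_nonneg _))
          positivity
      _ = 8 * |C| * ((n:ℝ) * (n:ℝ) ^ (-(1+η))) := by ring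
      _ = 8 * |C| * (n : ℝ) ^ (-η) := by rw [key]
  have hlim : Tendsto (fun n : ℕ => 8 * |C| * (n : ℝ) ^ (-η)) atTop (nhds 0) := by
    have h := (tendsto_rpow_neg_atTop hη).comp tendsto_natCast_atTop_atTop (α := ℕ)
    have := h.const_mul (8 * |C|)
    simpa using this
  apply squeeze_zero_norm' _ hlim
  filter_upwards [eventually_ge_atTop 1] with n hn
  exact hbound n hn

lemma mem_famT_iff {R n : ℕ} {p : ℕ × ℕ × ℕ} :
    p ∈ famT R n ↔ p.1 ≤ n ∧ p.2.1 ≤ n / 2 ^ p.1 ∧ 1 ≤ p.2.2 ∧ p.2.2 ≤ R := by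
  obtain ⟨t, q, r⟩ := p
  simp only [famT, Finset.mem_biUnion, Finset.mem_range, Finset.mem_product,
    Finset.mem_singleton, Finset.mem_Icc]
  constructor
  · rintro ⟨t', ht', rfl, hq, hr⟩
    exact ⟨by omega, by omega, hr.1, hr.2⟩
  · rintro ⟨ht, hq, hr1, hr2⟩
    exact ⟨t, by omega, rfl, by omega, hr1, hr2⟩

end YaoAux

/-- Yao (1988), Lemma 1. Let `Z 1, Z 2, ...` be i.i.d. `N(0, σ²)` random variables
(variance `v = σ² > 0`). For any `ε > 0`, the probability that the maximum over
`0 ≤ i < j ≤ n` of `(Z_{i+1} + ... + Z_j)²/(j-i)` exceeds `2(1+ε)σ² log n` tends to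
`0` as `n → ∞`. -/
theorem yao_lemma1 {Ω : Type*} [MeasurableSpace Ω] (μ : Measure Ω)
    [IsProbabilityMeasure μ] (v : NNReal) (hv : 0 < v)
    (Z : ℕ → Ω → ℝ) (hmeas : ∀ i, Measurable (Z i))
    (hindep : iIndepFun Z μ)
    (hlaw : ∀ i, μ.map (Z i) = gaussianReal 0 v)
    (ε : ℝ) (hε : 0 < ε) :
    Tendsto (fun n : ℕ =>
      μ {ω | ∃ i j : ℕ, i < j ∧ j ≤ n ∧
        2 * (1 + ε) * (v : ℝ) * Real.log n <
          (∑ t ∈ Finset.Ioc i j, Z t ω) ^ 2 / ((j : ℝ) - (i : ℝ))})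
      atTop (nhds 0) := by
  classical
  set δ : ℝ := min ε 1 with hδdef
  have hδpos : 0 < δ := lt_min hε one_pos
  have hδ1 : δ ≤ 1 := min_le_right _ _
  have hδε : δ ≤ ε := min_le_left _ _
  set η : ℝ := δ / 4 with hηdef
  have hηpos : 0 < η := by positivity
  set K : ℝ := 1 + δ / 4 with hKdef
  have hK1 : 1 ≤ K := by rw [hKdef]; linarith
  have hK54 : K ≤ 5 / 4 := by rw [hKdef]; linarith
  -- choose the scale parameter s
  obtain ⟨s, hs⟩ : ∃ s : ℕ, ((δ / 10) ^ 2)⁻¹ < (2:ℝ) ^ s :=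
    pow_unbounded_of_one_lt _ one_lt_two
  have hβ : Real.sqrt ((2:ℝ) ^ (s+1))⁻¹ ≤ δ / 10 := by
    have h2s : ((δ / 10) ^ 2)⁻¹ < (2:ℝ) ^ (s+1) :=
      hs.trans_le (pow_le_pow_right₀ one_le_two (Nat.le_succ s))
    have hinv : ((2:ℝ) ^ (s+1))⁻¹ ≤ (δ / 10) ^ 2 := by
      rw [inv_le_comm₀ (by positivity) (by positivity)]
      exact h2s.le
    calc Real.sqrt ((2:ℝ) ^ (s+1))⁻¹ ≤ Real.sqrt ((δ / 10) ^ 2) := Real.sqrt_le_sqrt hinv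
      _ = δ / 10 := Real.sqrt_sq (by positivity)
  have hKs : 1 + 2 * K * Real.sqrt ((2:ℝ) ^ (s+1))⁻¹ ≤ K := by
    have hsq : 0 ≤ Real.sqrt ((2:ℝ) ^ (s+1))⁻¹ := Real.sqrt_nonneg _
    nlinarith
  have hKfin : K ^ 2 * (1 + η) ≤ 1 + ε := by
    have : K ^ 2 * (1 + η) = (1 + δ/4) ^ 2 * (1 + δ/4) := by rw [hKdef, hηdef]
    rw [this]
    have hx14 : δ / 4 ≤ 1 / 4 := by linarith
    have key : (1 + δ/4) ^ 2 * (1 + δ/4) ≤ 1 + δ := by nlinarith [sq_nonneg δ, hδpos.le, hδ1]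
    linarith
  set R : ℕ := 2 ^ (s + 2) with hRdef
  -- the bounding sequence
  set b : ℕ → ℝ≥0∞ := fun n =>
    ENNReal.ofReal ((R : ℝ) * ((3 * n + 1 : ℕ) : ℝ) * (2 * Real.exp (-(1 + η) * Real.log n)))
    with hbdef
  have hblim : Tendsto b atTop (nhds 0) := by
    have h0 : (0:ℝ≥0∞) = ENNReal.ofReal 0 := by simp
    rw [hbdef, h0]
    exact ENNReal.tendsto_ofReal (real_limit (R : ℝ) η hηpos)
  -- main bound
  have hkey : ∀ n : ℕ, 2 ≤ n →
      μ {ω | ∃ i j : ℕ, i < j ∧ j ≤ n ∧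
        2 * (1 + ε) * (v : ℝ) * Real.log n <
          (∑ t ∈ Finset.Ioc i j, Z t ω) ^ 2 / ((j : ℝ) - (i : ℝ))} ≤ b n := by
    intro n hn
    have hn1 : (1:ℝ) ≤ n := by exact_mod_cast (by omega : 1 ≤ n)
    have hlog : 0 ≤ Real.log n := Real.log_nonneg hn1
    set c : ℝ := 2 * (1 + η) * (v : ℝ) * Real.log n with hcdef
    have hc0 : 0 ≤ c := by positivity
    set A : ℕ × ℕ × ℕ → Set Ω := fun p =>
      {ω | Real.sqrt (((p.2.2 * 2 ^ p.1 : ℕ) : ℝ) * c)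
        ≤ |∑ t ∈ Finset.Ioc (p.2.1 * 2 ^ p.1) ((p.2.1 + p.2.2) * 2 ^ p.1), Z t ω|}
      with hAdef
    have hsub : {ω | ∃ i j : ℕ, i < j ∧ j ≤ n ∧
        2 * (1 + ε) * (v : ℝ) * Real.log n <
          (∑ t ∈ Finset.Ioc i j, Z t ω) ^ 2 / ((j : ℝ) - (i : ℝ))}
        ⊆ ⋃ p ∈ famT R n, A p := by
      intro ω hω
      by_contra hnot
      simp only [Set.mem_iUnion, not_exists] at hnot
      obtain ⟨i, j, hij, hjn, hgt⟩ := hω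
      set S : ℕ → ℝ := fun m => ∑ t ∈ Finset.Ioc 0 m, Z t ω with hSdef
      have hS : ∀ a bb : ℕ, a ≤ bb → S bb - S a = ∑ t ∈ Finset.Ioc a bb, Z t ω := by
        intro a bb hab
        have h := Finset.sum_Ioc_consecutive (fun t => Z t ω) (Nat.zero_le a) hab
        have e1 : S bb = ∑ t ∈ Finset.Ioc 0 bb, Z t ω := rfl
        have e2 : S a = ∑ t ∈ Finset.Ioc 0 a, Z t ω := rfl
        rw [e1, e2]
        linarith
      have H : ∀ t q r : ℕ, 1 ≤ r → r ≤ 2 ^ (s+2) → (q + r) * 2 ^ t ≤ n →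
          |S ((q + r) * 2 ^ t) - S (q * 2 ^ t)| ≤ Real.sqrt ((r * 2 ^ t : ℕ) * c) := by
        intro t q r hr1 hr2 hle
        have hqle : q * 2 ^ t ≤ (q + r) * 2 ^ t := Nat.mul_le_mul_right _ (by omega)
        have h2t : 2 ^ t ≤ n := le_trans (Nat.le_mul_of_pos_left _ (by omega)) hle
        have htn : t ≤ n := le_trans (Nat.lt_two_pow_self (n := t)).le h2t
        have hqn : q ≤ n / 2 ^ t :=
          (Nat.le_div_iff_mul_le (Nat.two_pow_pos t)).mpr
            (le_trans hqle hle)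
        have hmem : (t, q, r) ∈ famT R n := mem_famT htn hqn hr1 hr2
        have hnp := hnot (t, q, r) hmem
        rw [hS _ _ hqle]
        exact le_of_not_ge fun hcon => hnp hcon
      have hchain := chaining S c hc0 n s K hK1 hKs H (j - i) i j rfl hij hjn
      have hsum : ∑ t ∈ Finset.Ioc i j, Z t ω = S j - S i := (hS i j hij.le).symm
      have hℓpos : (0:ℝ) < (j:ℝ) - i := by
        have : (i:ℝ) < j := by exact_mod_cast hij
        linarith
      have hcast : ((j - i : ℕ) : ℝ) = (j:ℝ) - i := by
        push_cast [Nat.cast_sub hij.le]; ring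
      have hsq : (S j - S i) ^ 2 ≤ K ^ 2 * (((j:ℝ) - i) * c) := by
        have h1 : |S j - S i| ^ 2 ≤ (K * Real.sqrt (((j - i : ℕ) : ℝ) * c)) ^ 2 :=
          pow_le_pow_left₀ (abs_nonneg _) hchain 2
        rw [sq_abs, mul_pow, Real.sq_sqrt (by positivity), hcast] at h1
        linarith [h1]
      have hdiv : (∑ t ∈ Finset.Ioc i j, Z t ω) ^ 2 / ((j : ℝ) - i) ≤ K ^ 2 * c := by
        rw [hsum, div_le_iff₀ hℓpos]
        calc (S j - S i) ^ 2 ≤ K ^ 2 * (((j:ℝ) - i) * c) := hsq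
          _ = K ^ 2 * c * ((j:ℝ) - i) := by ring
      have hfinal : K ^ 2 * c ≤ 2 * (1 + ε) * (v : ℝ) * Real.log n := by
        rw [hcdef]
        have hv0 : (0:ℝ) ≤ (v:ℝ) := v.2
        calc K ^ 2 * (2 * (1 + η) * (v:ℝ) * Real.log n)
            = (K ^ 2 * (1 + η)) * (2 * (v:ℝ) * Real.log n) := by ring
          _ ≤ (1 + ε) * (2 * (v:ℝ) * Real.log n) := by
              apply mul_le_mul_of_nonneg_right hKfin (by positivity)
          _ = 2 * (1 + ε) * (v:ℝ) * Real.log n := by ring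
      exact absurd hgt (not_lt.mpr (hdiv.trans hfinal))
    -- measure computation
    have htail : ∀ p ∈ famT R n,
        μ (A p) ≤ ENNReal.ofReal (2 * Real.exp (-(1 + η) * Real.log n)) := by
      rintro ⟨t, q, r⟩ hp
      rw [mem_famT_iff] at hp
      dsimp only at hp
      obtain ⟨htn, hqn, hr1, hr2⟩ := hp
      have hab : q * 2 ^ t < (q + r) * 2 ^ t :=
        (Nat.mul_lt_mul_right (Nat.two_pow_pos t : 0 < 2 ^ t)).mpr (by omega)
      have hx0 : (0:ℝ) ≤ Real.sqrt (((r * 2 ^ t : ℕ) : ℝ) * c) := Real.sqrt_nonneg _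
      have hTB := tail_bound μ v hv Z hmeas hindep hlaw (q * 2 ^ t) ((q + r) * 2 ^ t)
        hab trivial _ hx0
      refine hTB.trans (le_of_eq ?_)
      congr 1
      have hm : (0:ℝ) < ((r * 2 ^ t : ℕ) : ℝ) := by
        have : 0 < r * 2 ^ t := Nat.mul_pos (by omega) (Nat.two_pow_pos t)
        exact_mod_cast this
      have hbma : (((q + r) * 2 ^ t : ℕ) : ℝ) - ((q * 2 ^ t : ℕ) : ℝ)
          = ((r * 2 ^ t : ℕ) : ℝ) := by push_cast; ring
      rw [Real.sq_sqrt (by positivity), hbma]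
      rw [hcdef]
      have hv0 : (0:ℝ) < (v:ℝ) := hv
      field_simp
    calc μ _ ≤ μ (⋃ p ∈ famT R n, A p) := measure_mono hsub
      _ ≤ ∑ p ∈ famT R n, μ (A p) := measure_biUnion_finset_le _ _
      _ ≤ ∑ _p ∈ famT R n, ENNReal.ofReal (2 * Real.exp (-(1 + η) * Real.log n)) :=
          Finset.sum_le_sum htail
      _ = ((famT R n).card : ℝ≥0∞) * ENNReal.ofReal (2 * Real.exp (-(1 + η) * Real.log n)) := by
          rw [Finset.sum_const, nsmul_eq_mul]
      _ ≤ b n := by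
          rw [hbdef]
          have h1 : ((famT R n).card : ℝ≥0∞)
              ≤ ENNReal.ofReal ((R:ℝ) * ((3 * n + 1 : ℕ) : ℝ)) := by
            have h2 : ((famT R n).card : ℝ) ≤ (R:ℝ) * ((3 * n + 1 : ℕ) : ℝ) := by
              have := card_famT_le R n
              have h3 : ((famT R n).card : ℝ) ≤ (((3 * n + 1) * R : ℕ) : ℝ) := by
                exact_mod_cast this
              refine h3.trans (le_of_eq ?_)
              push_cast; ring
            calc ((famT R n).card : ℝ≥0∞) = ENNReal.ofReal ((famT R n).card : ℝ) := by
                  rw [ENNReal.ofReal_natCast]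
              _ ≤ ENNReal.ofReal ((R:ℝ) * ((3 * n + 1 : ℕ) : ℝ)) :=
                  ENNReal.ofReal_le_ofReal h2
          calc ((famT R n).card : ℝ≥0∞) * ENNReal.ofReal (2 * Real.exp (-(1 + η) * Real.log n))
              ≤ ENNReal.ofReal ((R:ℝ) * ((3 * n + 1 : ℕ) : ℝ))
                * ENNReal.ofReal (2 * Real.exp (-(1 + η) * Real.log n)) := by
                exact mul_le_mul_left h1 _
            _ = ENNReal.ofReal ((R:ℝ) * ((3 * n + 1 : ℕ) : ℝ)
                * (2 * Real.exp (-(1 + η) * Real.log n))) := by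
                rw [← ENNReal.ofReal_mul (by positivity)]
  -- conclude by squeezing
  refine tendsto_of_tendsto_of_tendsto_of_le_of_le' tendsto_const_nhds hblim
    (Eventually.of_forall fun n => zero_le) ?_
  filter_upwards [eventually_ge_atTop 2] with n hn
  exact hkey n hn
end

section
/- Let the data have a single mean change of size μ ≠ 0 at time τ, with Gaussian N(0,σ²) noise. For a window of half-length c = c(n) = ⌈(log n)^{1+α}⌉ centered at τ, the normalized excess residual sum of squares of the null fit, (RSS(y_{τ-c+1:τ+c}; ∅) − Σ Z_j²)/c, converges in probability to μ²/2 as n → ∞. Consequently, for any fixed penalty multiple K, the cost reduction from fitting the true changepoint within this window eventually exceeds K·log n with probability tending to 1. -/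
open MeasureTheory ProbabilityTheory Filter

/-- The signal-plus-noise observation on a window of `2c` points centred at the
changepoint: the first `c` points have mean `0` and the last `c` points mean `μ0`. -/
noncomputable def Ysig (μ0 : ℝ) (c : ℕ) (Z : ℕ → ℝ) (i : ℕ) : ℝ :=
  (if c < i then μ0 else 0) + Z i

/-- Residual sum of squares of the null fit (a single common mean) on the window
`i = 1, ..., 2c`. -/
noncomputable def RSS0 (μ0 : ℝ) (c : ℕ) (Z : ℕ → ℝ) : ℝ :=
  ∑ i ∈ Finset.Icc 1 (2 * c),
    (Ysig μ0 c Z i - (∑ j ∈ Finset.Icc 1 (2 * c), Ysig μ0 c Z j) / (2 * (c : ℝ))) ^ 2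

/-- Residual sum of squares when the true changepoint (at the middle of the window)
is fitted: a separate mean on each half of the window.  Since each half of the data
has constant signal, this equals the corresponding RSS of the noise. -/
noncomputable def RSS1 (c : ℕ) (Z : ℕ → ℝ) : ℝ :=
  (∑ i ∈ Finset.Icc 1 c, (Z i - (∑ j ∈ Finset.Icc 1 c, Z j) / (c : ℝ)) ^ 2) +
    ∑ i ∈ Finset.Ioc c (2 * c),
      (Z i - (∑ j ∈ Finset.Ioc c (2 * c), Z j) / (c : ℝ)) ^ 2

/-- The window half-length `c(n) = ⌈(log n)^(1+α)⌉`. -/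
noncomputable def cwin (α : ℝ) (n : ℕ) : ℕ :=
  ⌈(Real.log n) ^ ((1 : ℝ) + α)⌉₊

namespace WindowRSS

open Real NNReal

lemma gauss_memLp {V : ℝ≥0} (hV : V ≠ 0) : MemLp id 2 (gaussianReal 0 V) := by
  rw [memLp_two_iff_integrable_sq aestronglyMeasurable_id]
  rw [gaussianReal_of_var_ne_zero 0 hV,
    integrable_withDensity_iff (measurable_gaussianPDF 0 V)
      (ae_of_all _ fun x => ENNReal.ofReal_lt_top)]
  have hVpos : (0:ℝ) < (V:ℝ) := by positivity
  have hb : (0:ℝ) < (2*(V:ℝ))⁻¹ := by positivity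
  have h := (integrable_rpow_mul_exp_neg_mul_sq hb (s := 2) (by norm_num)).const_mul
    ((Real.sqrt (2 * π * V))⁻¹)
  refine h.congr (ae_of_all _ fun x => ?_)
  have h2 : (x:ℝ) ^ (2:ℝ) = x ^ 2 := by
    rw [show (2:ℝ) = ((2:ℕ):ℝ) by norm_num, Real.rpow_natCast]
  unfold gaussianPDF
  simp only [ENNReal.toReal_ofReal (gaussianPDFReal_nonneg 0 V x)]
  unfold gaussianPDFReal
  simp only [id_eq, h2, sub_zero]
  rw [show -(x^2) / (2*(V:ℝ)) = -(2*(V:ℝ))⁻¹ * x^2 by field_simp]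
  ring

lemma gauss_integral_id {V : ℝ≥0} (hV : V ≠ 0) : ∫ x, x ∂(gaussianReal 0 V) = 0 := by
  have hmap : (gaussianReal 0 V).map (fun x => (-1:ℝ) * x) = gaussianReal 0 V := by
    have := gaussianReal_map_const_mul (μ := 0) (v := V) (-1)
    simpa using this.trans (by norm_num)
  have h : ∫ x, x ∂(gaussianReal 0 V) = ∫ x, (-1:ℝ) * x ∂(gaussianReal 0 V) := by
    conv_lhs => rw [← hmap]
    exact integral_map (measurable_id.const_mul (-1:ℝ)).aemeasurable
      (aestronglyMeasurable_id (α := ℝ))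
  have h2 : ∫ x, (-1:ℝ) * x ∂(gaussianReal 0 V) = - ∫ x, x ∂(gaussianReal 0 V) := by
    simp only [neg_one_mul]
    exact integral_neg _
  linarith [h.trans h2]

section
variable {Ω : Type*} [MeasurableSpace Ω] (μm : Measure Ω) [IsProbabilityMeasure μm]
  {V : ℝ≥0} (hV : V ≠ 0) (Z : ℕ → Ω → ℝ) (hmeas : ∀ i, Measurable (Z i))
  (hlaw : ∀ i, μm.map (Z i) = gaussianReal 0 V)

include hV hlaw hmeas in
lemma Z_memLp (i : ℕ) : MemLp (Z i) 2 μm := by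
  have h := gauss_memLp hV
  rw [← hlaw i] at h
  simpa [Function.id_comp] using
    (memLp_map_measure_iff aestronglyMeasurable_id (hmeas i).aemeasurable).mp h

include hV hlaw hmeas in
lemma Z_integral (i : ℕ) : ∫ ω, Z i ω ∂μm = 0 := by
  have h := integral_map (μ := μm) (φ := Z i) (hmeas i).aemeasurable
    (aestronglyMeasurable_id (α := ℝ))
  rw [hlaw i] at h
  simp only [id_eq] at h
  rw [← h]
  exact gauss_integral_id hV

include hV hlaw hmeas in
lemma Z_variance (i : ℕ) :
    variance (Z i) μm = ∫ x, x ^ 2 ∂(gaussianReal 0 V) := by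
  rw [variance_eq_sub (Z_memLp μm hV Z hmeas hlaw i)]
  have h2 := integral_map (μ := μm) (φ := Z i) (hmeas i).aemeasurable
    (f := fun x : ℝ => x ^ 2) (by fun_prop)
  rw [hlaw i] at h2
  have := Z_integral μm hV Z hmeas hlaw i
  simp only [Pi.pow_apply]
  rw [← h2, this]
  ring

include hV hlaw hmeas in
lemma cheb (hindep : iIndepFun Z μm) (s : Finset ℕ) {ε : ℝ}
    (hε : 0 < ε) :
    μm {ω | ε ≤ |∑ i ∈ s, Z i ω|} ≤
      ENNReal.ofReal ((s.card : ℝ) * (∫ x, x ^ 2 ∂(gaussianReal 0 V)) / ε ^ 2) := by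
  have hm2 : ∀ i ∈ s, MemLp (Z i) 2 μm := fun i _ => Z_memLp μm hV Z hmeas hlaw i
  have hX2 : MemLp (∑ i ∈ s, Z i) 2 μm := memLp_finset_sum' s hm2
  have hEX : μm[∑ i ∈ s, Z i] = 0 := by
    have : ∫ ω, ∑ i ∈ s, Z i ω ∂μm = ∑ i ∈ s, ∫ ω, Z i ω ∂μm :=
      integral_finset_sum s fun i _ => (hm2 i ‹_›).integrable one_le_two
    simp only [Finset.sum_apply]
    rw [this]
    exact Finset.sum_eq_zero fun i _ => Z_integral μm hV Z hmeas hlaw i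
  have hVar : variance (∑ i ∈ s, Z i) μm =
      (s.card : ℝ) * ∫ x, x ^ 2 ∂(gaussianReal 0 V) := by
    rw [IndepFun.variance_sum hm2
      (fun i _ j _ hij => hindep.indepFun hij)]
    rw [Finset.sum_congr rfl fun i _ => Z_variance μm hV Z hmeas hlaw i]
    simp [Finset.sum_const, nsmul_eq_mul]
  have h := meas_ge_le_variance_div_sq hX2 hε
  rw [hEX, hVar] at h
  simpa [Finset.sum_apply] using h

end

lemma sum_sq_center (s : Finset ℕ) (f : ℕ → ℝ) {d : ℝ} (hd : (s.card : ℝ) = d)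
    (h0 : d ≠ 0) :
    ∑ i ∈ s, (f i - (∑ j ∈ s, f j) / d) ^ 2
      = ∑ i ∈ s, f i ^ 2 - (∑ j ∈ s, f j) ^ 2 / d := by
  set S := ∑ j ∈ s, f j with hS
  have : ∀ i ∈ s, (f i - S / d) ^ 2 = f i ^ 2 - (2 * S / d) * f i + (S / d) ^ 2 := by
    intro i _; ring
  rw [Finset.sum_congr rfl this]
  rw [Finset.sum_add_distrib, Finset.sum_sub_distrib, ← Finset.mul_sum, Finset.sum_const,
    nsmul_eq_mul, hd, ← hS]
  field_simp
  ring

lemma icc_split (c : ℕ) (g : ℕ → ℝ) :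
    ∑ i ∈ Finset.Icc 1 (2 * c), g i
      = ∑ i ∈ Finset.Icc 1 c, g i + ∑ i ∈ Finset.Ioc c (2 * c), g i := by
  have hset : Finset.Icc 1 (2 * c) = Finset.Icc 1 c ∪ Finset.Ioc c (2 * c) := by
    ext i
    simp only [Finset.mem_Icc, Finset.mem_Ioc, Finset.mem_union]
    omega
  rw [hset, Finset.sum_union]
  rw [Finset.disjoint_left]
  intro i hi hi'
  simp only [Finset.mem_Icc, Finset.mem_Ioc] at hi hi'
  omega

lemma rss0_eq (μ0 : ℝ) {c : ℕ} (hc : 0 < c) (Z : ℕ → ℝ) :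
    RSS0 μ0 c Z - ∑ i ∈ Finset.Icc 1 (2 * c), Z i ^ 2
      = c * μ0 ^ 2 + 2 * μ0 * (∑ i ∈ Finset.Ioc c (2 * c), Z i)
        - ((∑ i ∈ Finset.Icc 1 c, Z i) + (∑ i ∈ Finset.Ioc c (2 * c), Z i) + c * μ0) ^ 2
          / (2 * c) := by
  have hc' : (c : ℝ) ≠ 0 := Nat.cast_ne_zero.mpr hc.ne'
  have hcard : ((Finset.Icc 1 (2 * c)).card : ℝ) = 2 * (c : ℝ) := by
    have : (Finset.Icc 1 (2 * c)).card = 2 * c := by rw [Nat.card_Icc]; omega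
    rw [this]; push_cast; ring
  have key := sum_sq_center (Finset.Icc 1 (2 * c)) (Ysig μ0 c Z) hcard (by positivity)
  have hY1 : ∀ i ∈ Finset.Icc 1 c, Ysig μ0 c Z i = Z i := by
    intro i hi
    simp only [Finset.mem_Icc] at hi
    simp [Ysig, Nat.not_lt.mpr hi.2]
  have hY2 : ∀ i ∈ Finset.Ioc c (2 * c), Ysig μ0 c Z i = μ0 + Z i := by
    intro i hi
    simp only [Finset.mem_Ioc] at hi
    simp [Ysig, hi.1]
  have hcard2 : ((Finset.Ioc c (2 * c)).card : ℝ) = (c : ℝ) := by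
    have : (Finset.Ioc c (2 * c)).card = c := by rw [Nat.card_Ioc]; omega
    rw [this]
  have hsum : ∑ j ∈ Finset.Icc 1 (2 * c), Ysig μ0 c Z j
      = (∑ i ∈ Finset.Icc 1 c, Z i) + ((∑ i ∈ Finset.Ioc c (2 * c), Z i) + c * μ0) := by
    rw [icc_split c, Finset.sum_congr rfl hY1, Finset.sum_congr rfl hY2,
      Finset.sum_add_distrib, Finset.sum_const, nsmul_eq_mul, hcard2]
    ring
  have hsq : ∑ i ∈ Finset.Icc 1 (2 * c), Ysig μ0 c Z i ^ 2
      = (∑ i ∈ Finset.Icc 1 (2 * c), Z i ^ 2) + c * μ0 ^ 2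
        + 2 * μ0 * (∑ i ∈ Finset.Ioc c (2 * c), Z i) := by
    have e1 : ∑ i ∈ Finset.Icc 1 c, Ysig μ0 c Z i ^ 2 = ∑ i ∈ Finset.Icc 1 c, Z i ^ 2 :=
      Finset.sum_congr rfl fun i hi => by rw [hY1 i hi]
    have e2 : ∑ i ∈ Finset.Ioc c (2 * c), Ysig μ0 c Z i ^ 2
        = ∑ i ∈ Finset.Ioc c (2 * c), (μ0 ^ 2 + 2 * μ0 * Z i + Z i ^ 2) :=
      Finset.sum_congr rfl fun i hi => by rw [hY2 i hi]; ring
    rw [icc_split c (fun i => Ysig μ0 c Z i ^ 2), e1, e2,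
      icc_split c (fun i => Z i ^ 2), Finset.sum_add_distrib, Finset.sum_add_distrib,
      Finset.sum_const, nsmul_eq_mul, hcard2, ← Finset.mul_sum]
    ring
  rw [RSS0, key, hsq, hsum]
  ring

lemma rss1_eq {c : ℕ} (hc : 0 < c) (Z : ℕ → ℝ) :
    RSS1 c Z = (∑ i ∈ Finset.Icc 1 (2 * c), Z i ^ 2)
      - (∑ i ∈ Finset.Icc 1 c, Z i) ^ 2 / c
      - (∑ i ∈ Finset.Ioc c (2 * c), Z i) ^ 2 / c := by
  have hc' : (c : ℝ) ≠ 0 := Nat.cast_ne_zero.mpr hc.ne'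
  have h1 : ((Finset.Icc 1 c).card : ℝ) = (c : ℝ) := by
    have : (Finset.Icc 1 c).card = c := by rw [Nat.card_Icc]; omega
    rw [this]
  have h2 : ((Finset.Ioc c (2 * c)).card : ℝ) = (c : ℝ) := by
    have : (Finset.Ioc c (2 * c)).card = c := by rw [Nat.card_Ioc]; omega
    rw [this]
  rw [RSS1, sum_sq_center _ _ h1 hc', sum_sq_center _ _ h2 hc', icc_split c (fun i => Z i ^ 2)]
  ring

lemma Ebound {μ0 A B ε : ℝ} (hε1 : ε ≤ 1) (hA : |A| < ε) (hB : |B| < ε) :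
    |μ0 ^ 2 / 2 + 2 * μ0 * B - (A + B + μ0) ^ 2 / 2| ≤ (2 * |μ0| + 2) * ε := by
  have hA' := abs_lt.mp hA
  have hB' := abs_lt.mp hB
  have hε0 : 0 < ε := lt_of_le_of_lt (abs_nonneg A) hA
  have hkey : μ0 ^ 2 / 2 + 2 * μ0 * B - (A + B + μ0) ^ 2 / 2
      = μ0 * (B - A) - (A + B) ^ 2 / 2 := by ring
  rw [hkey, abs_le]
  have h1 : μ0 * (B - A) ≤ |μ0| * (2 * ε) := by
    calc μ0 * (B - A) ≤ |μ0 * (B - A)| := le_abs_self _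
    _ = |μ0| * |B - A| := abs_mul _ _
    _ ≤ |μ0| * (2 * ε) := by
        apply mul_le_mul_of_nonneg_left _ (abs_nonneg _)
        calc |B - A| ≤ |B| + |A| := abs_sub _ _
        _ ≤ 2 * ε := by linarith
  have h2 : -(|μ0| * (2 * ε)) ≤ μ0 * (B - A) := by
    calc -(|μ0| * (2 * ε)) ≤ -|μ0 * (B - A)| := by
          simp only [neg_le_neg_iff]
          calc |μ0 * (B - A)| = |μ0| * |B - A| := abs_mul _ _
          _ ≤ |μ0| * (2 * ε) := by
              apply mul_le_mul_of_nonneg_left _ (abs_nonneg _)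
              calc |B - A| ≤ |B| + |A| := abs_sub _ _
              _ ≤ 2 * ε := by linarith
    _ ≤ μ0 * (B - A) := neg_abs_le _
  have h3 : (A + B) ^ 2 ≤ (2 * ε) ^ 2 := by
    have : |A + B| ≤ 2 * ε := by
      calc |A + B| ≤ |A| + |B| := abs_add_le _ _
      _ ≤ 2 * ε := by linarith
    calc (A + B) ^ 2 = |A + B| ^ 2 := (sq_abs _).symm
    _ ≤ (2 * ε) ^ 2 := by nlinarith [abs_nonneg (A + B)]
  have h4 : (0:ℝ) ≤ (A + B) ^ 2 := sq_nonneg _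
  constructor <;> nlinarith [abs_nonneg μ0, sq_nonneg ε]

lemma cwin_le (α : ℝ) (n : ℕ) : (Real.log n) ^ ((1:ℝ) + α) ≤ (cwin α n : ℝ) :=
  Nat.le_ceil _

lemma cwin_tendsto {α : ℝ} (hα : 0 < α) :
    Tendsto (fun n : ℕ => (cwin α n : ℝ)) atTop atTop := by
  have hL : Tendsto (fun n : ℕ => Real.log n) atTop atTop :=
    Real.tendsto_log_atTop.comp tendsto_natCast_atTop_atTop
  have hpow : Tendsto (fun n : ℕ => (Real.log n) ^ ((1:ℝ) + α)) atTop atTop :=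
    (_root_.tendsto_rpow_atTop (by linarith)).comp hL
  exact tendsto_atTop_mono (fun n => cwin_le α n) hpow

end WindowRSS

open WindowRSS

/-- Key estimate of Corollary A.3 (extending Yao 1988).  Data with a single mean
change of size `μ0 ≠ 0`, i.i.d. `N(0, σ²)` noise, window of half-length
`c(n) = ⌈(log n)^(1+α)⌉` around the change.  Then
`(RSS(null) - Σ Z_j²)/c(n) → μ0²/2` in probability as `n → ∞`; consequently, for any
fixed penalty multiple `K`, the cost reduction from fitting the true changepoint
within this window eventually exceeds `K log n` with probability tending to `1`. -/
theorem window_rss_limit_and_cost_reduction {Ω : Type*} [MeasurableSpace Ω]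
    (μm : Measure Ω) [IsProbabilityMeasure μm] (σ : ℝ) (hσ : 0 < σ)
    (μ0 : ℝ) (hμ0 : μ0 ≠ 0) (α : ℝ) (hα : 0 < α)
    (Z : ℕ → Ω → ℝ) (hmeas : ∀ i, Measurable (Z i))
    (hindep : iIndepFun Z μm)
    (hlaw : ∀ i, μm.map (Z i) = gaussianReal 0 (Real.toNNReal (σ ^ 2))) :
    (∀ δ : ℝ, 0 < δ →
      Tendsto (fun n : ℕ =>
        μm {ω | δ <
          |(RSS0 μ0 (cwin α n) (fun i => Z i ω) -
              ∑ i ∈ Finset.Icc 1 (2 * cwin α n), (Z i ω) ^ 2) / (cwin α n : ℝ) -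
            μ0 ^ 2 / 2|})
        atTop (nhds 0)) ∧
    (∀ K : ℝ,
      Tendsto (fun n : ℕ =>
        μm {ω | K * Real.log n <
          RSS0 μ0 (cwin α n) (fun i => Z i ω) - RSS1 (cwin α n) (fun i => Z i ω)})
        atTop (nhds 1)) := by
  set V : NNReal := Real.toNNReal (σ ^ 2) with hVdef
  have hV : V ≠ 0 := by
    rw [hVdef, ne_eq, Real.toNNReal_eq_zero, not_le]
    positivity
  set w : ℝ := ∫ x, x ^ 2 ∂(gaussianReal 0 V) with hwdef
  have hw0 : 0 ≤ w := integral_nonneg fun x => sq_nonneg x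
  have hcw : Tendsto (fun n : ℕ => (cwin α n : ℝ)) atTop atTop := cwin_tendsto hα
  have hc1 : ∀ᶠ n : ℕ in atTop, 1 ≤ cwin α n := by
    filter_upwards [hcw.eventually_ge_atTop 1] with n hn
    exact_mod_cast hn
  have part1 : ∀ δ : ℝ, 0 < δ →
      Tendsto (fun n : ℕ =>
        μm {ω | δ <
          |(RSS0 μ0 (cwin α n) (fun i => Z i ω) -
              ∑ i ∈ Finset.Icc 1 (2 * cwin α n), (Z i ω) ^ 2) / (cwin α n : ℝ) -
            μ0 ^ 2 / 2|})
        atTop (nhds 0) := by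
    intro δ hδ
    set ε : ℝ := min 1 (δ / (2 * |μ0| + 2)) with hεdef
    have hεpos : 0 < ε := lt_min one_pos (by positivity)
    have hε1 : ε ≤ 1 := min_le_left _ _
    have hεδ : (2 * |μ0| + 2) * ε ≤ δ := by
      have h2 : (0:ℝ) < 2 * |μ0| + 2 := by positivity
      calc (2 * |μ0| + 2) * ε ≤ (2 * |μ0| + 2) * (δ / (2 * |μ0| + 2)) :=
            mul_le_mul_of_nonneg_left (min_le_right _ _) h2.le
      _ = δ := by field_simp
    -- eventual bound on the measure
    have hbound : ∀ n : ℕ, 1 ≤ cwin α n →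
        μm {ω | δ <
          |(RSS0 μ0 (cwin α n) (fun i => Z i ω) -
              ∑ i ∈ Finset.Icc 1 (2 * cwin α n), (Z i ω) ^ 2) / (cwin α n : ℝ) -
            μ0 ^ 2 / 2|} ≤
        ENNReal.ofReal (2 * ((cwin α n : ℝ) * w / ((cwin α n : ℝ) * ε) ^ 2)) := by
      intro n hn
      set c : ℕ := cwin α n with hcdef
      have hcpos : 0 < c := hn
      have hcpos' : (0:ℝ) < (c : ℝ) := by exact_mod_cast hcpos
      have hcε : (0:ℝ) < (c : ℝ) * ε := by positivity
      have hsub : {ω | δ <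
            |(RSS0 μ0 c (fun i => Z i ω) -
                ∑ i ∈ Finset.Icc 1 (2 * c), (Z i ω) ^ 2) / (c : ℝ) - μ0 ^ 2 / 2|} ⊆
          {ω | (c : ℝ) * ε ≤ |∑ i ∈ Finset.Icc 1 c, Z i ω|} ∪
          {ω | (c : ℝ) * ε ≤ |∑ i ∈ Finset.Ioc c (2 * c), Z i ω|} := by
        intro ω hω
        simp only [Set.mem_setOf_eq] at hω
        by_contra hcon
        simp only [Set.mem_union, Set.mem_setOf_eq, not_or, not_le] at hcon
        obtain ⟨h1, h2⟩ := hcon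
        have hA : |(∑ i ∈ Finset.Icc 1 c, Z i ω) / (c : ℝ)| < ε := by
          rw [abs_div, abs_of_pos hcpos', div_lt_iff₀ hcpos']
          linarith [h1]
        have hB : |(∑ i ∈ Finset.Ioc c (2 * c), Z i ω) / (c : ℝ)| < ε := by
          rw [abs_div, abs_of_pos hcpos', div_lt_iff₀ hcpos']
          linarith [h2]
        have hiden : (RSS0 μ0 c (fun i => Z i ω) -
              ∑ i ∈ Finset.Icc 1 (2 * c), (Z i ω) ^ 2) / (c : ℝ) - μ0 ^ 2 / 2
            = μ0 ^ 2 / 2 + 2 * μ0 * ((∑ i ∈ Finset.Ioc c (2 * c), Z i ω) / (c : ℝ))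
              - ((∑ i ∈ Finset.Icc 1 c, Z i ω) / (c : ℝ)
                  + (∑ i ∈ Finset.Ioc c (2 * c), Z i ω) / (c : ℝ) + μ0) ^ 2 / 2 := by
          rw [rss0_eq μ0 hcpos (fun i => Z i ω)]
          field_simp
          ring
        rw [hiden] at hω
        have := Ebound (μ0 := μ0) hε1 hA hB
        linarith [this, hεδ, hω]
      have hcard1 : (Finset.Icc 1 c).card = c := by rw [Nat.card_Icc]; omega
      have hcard2 : (Finset.Ioc c (2 * c)).card = c := by rw [Nat.card_Ioc]; omega
      have hch1 := cheb μm hV Z hmeas hlaw hindep (Finset.Icc 1 c) hcε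
      have hch2 := cheb μm hV Z hmeas hlaw hindep (Finset.Ioc c (2 * c)) hcε
      rw [hcard1] at hch1
      rw [hcard2] at hch2
      have hq : (0:ℝ) ≤ (c : ℝ) * w / ((c : ℝ) * ε) ^ 2 := by positivity
      calc μm _ ≤ μm ({ω | (c : ℝ) * ε ≤ |∑ i ∈ Finset.Icc 1 c, Z i ω|} ∪
            {ω | (c : ℝ) * ε ≤ |∑ i ∈ Finset.Ioc c (2 * c), Z i ω|}) := measure_mono hsub
      _ ≤ μm {ω | (c : ℝ) * ε ≤ |∑ i ∈ Finset.Icc 1 c, Z i ω|} +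
            μm {ω | (c : ℝ) * ε ≤ |∑ i ∈ Finset.Ioc c (2 * c), Z i ω|} :=
          measure_union_le _ _
      _ ≤ ENNReal.ofReal ((c : ℝ) * w / ((c : ℝ) * ε) ^ 2) +
            ENNReal.ofReal ((c : ℝ) * w / ((c : ℝ) * ε) ^ 2) := add_le_add hch1 hch2
      _ = ENNReal.ofReal (2 * ((c : ℝ) * w / ((c : ℝ) * ε) ^ 2)) := by
          rw [← ENNReal.ofReal_add hq hq]; congr 1; ring
    have hreal : Tendsto (fun n : ℕ =>
        2 * ((cwin α n : ℝ) * w / ((cwin α n : ℝ) * ε) ^ 2)) atTop (nhds 0) := by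
      have hg : Tendsto (fun n : ℕ => 2 * w / ε ^ 2 / (cwin α n : ℝ)) atTop (nhds 0) :=
        tendsto_const_nhds.div_atTop hcw
      refine hg.congr' ?_
      filter_upwards [hc1] with n hn
      have hcpos' : (0:ℝ) < (cwin α n : ℝ) := by
        have : (0:ℕ) < cwin α n := hn
        exact_mod_cast this
      field_simp
    have hofR : Tendsto (fun n : ℕ =>
        ENNReal.ofReal (2 * ((cwin α n : ℝ) * w / ((cwin α n : ℝ) * ε) ^ 2)))
        atTop (nhds 0) := by
      have := (ENNReal.continuous_ofReal.tendsto 0).comp hreal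
      simpa only [ENNReal.ofReal_zero, Function.comp_def] using this
    refine tendsto_of_tendsto_of_tendsto_of_le_of_le' tendsto_const_nhds hofR
      (Eventually.of_forall fun n => bot_le) ?_
    filter_upwards [hc1] with n hn
    exact hbound n hn
  refine ⟨part1, ?_⟩
  intro K
  have hδ4 : (0:ℝ) < μ0 ^ 2 / 4 := by positivity
  have hbad := part1 (μ0 ^ 2 / 4) hδ4
  have hlogT : Tendsto (fun n : ℕ => Real.log n) atTop atTop :=
    Real.tendsto_log_atTop.comp tendsto_natCast_atTop_atTop
  have hlog1 : ∀ᶠ n : ℕ in atTop, 1 ≤ Real.log n := hlogT.eventually_ge_atTop 1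
  have hpowα : Tendsto (fun n : ℕ => (Real.log n) ^ (α : ℝ)) atTop atTop :=
    (_root_.tendsto_rpow_atTop hα).comp hlogT
  have hKα : ∀ᶠ n : ℕ in atTop, (|K| + 1) / (μ0 ^ 2 / 4) ≤ (Real.log n) ^ (α : ℝ) :=
    hpowα.eventually_ge_atTop _
  have ev2 : ∀ᶠ n : ℕ in atTop, K * Real.log n < μ0 ^ 2 / 4 * (cwin α n : ℝ) := by
    filter_upwards [hlog1, hKα] with n hL hKn
    have hL0 : (0:ℝ) < Real.log n := lt_of_lt_of_le one_pos hL
    have hK' : |K| + 1 ≤ μ0 ^ 2 / 4 * (Real.log n) ^ (α : ℝ) := by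
      rw [div_le_iff₀ hδ4] at hKn
      linarith [hKn]
    have hceil : (Real.log n) ^ ((1:ℝ) + α) ≤ (cwin α n : ℝ) := cwin_le α n
    calc K * Real.log n ≤ |K| * Real.log n :=
          mul_le_mul_of_nonneg_right (le_abs_self K) hL0.le
    _ < (μ0 ^ 2 / 4 * (Real.log n) ^ (α : ℝ)) * Real.log n := by
        apply mul_lt_mul_of_pos_right _ hL0
        linarith [hK']
    _ = μ0 ^ 2 / 4 * (Real.log n) ^ ((1:ℝ) + α) := by
        rw [show (1:ℝ) + α = α + 1 by ring, Real.rpow_add_one hL0.ne']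
        ring
    _ ≤ μ0 ^ 2 / 4 * (cwin α n : ℝ) := mul_le_mul_of_nonneg_left hceil (by positivity)
  have hgoodlb : ∀ᶠ n : ℕ in atTop,
      1 - μm {ω | μ0 ^ 2 / 4 <
          |(RSS0 μ0 (cwin α n) (fun i => Z i ω) -
              ∑ i ∈ Finset.Icc 1 (2 * cwin α n), (Z i ω) ^ 2) / (cwin α n : ℝ) -
            μ0 ^ 2 / 2|} ≤
      μm {ω | K * Real.log n <
          RSS0 μ0 (cwin α n) (fun i => Z i ω) - RSS1 (cwin α n) (fun i => Z i ω)} := by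
    filter_upwards [hc1, ev2] with n hn hK2
    set c : ℕ := cwin α n with hcdef
    have hcpos : 0 < c := hn
    have hcpos' : (0:ℝ) < (c : ℝ) := by exact_mod_cast hcpos
    have hcov : (Set.univ : Set Ω) ⊆
        {ω | μ0 ^ 2 / 4 <
          |(RSS0 μ0 c (fun i => Z i ω) -
              ∑ i ∈ Finset.Icc 1 (2 * c), (Z i ω) ^ 2) / (c : ℝ) - μ0 ^ 2 / 2|} ∪
        {ω | K * Real.log n <
          RSS0 μ0 c (fun i => Z i ω) - RSS1 c (fun i => Z i ω)} := by
      intro ω _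
      by_cases hb : μ0 ^ 2 / 4 <
          |(RSS0 μ0 c (fun i => Z i ω) -
              ∑ i ∈ Finset.Icc 1 (2 * c), (Z i ω) ^ 2) / (c : ℝ) - μ0 ^ 2 / 2|
      · exact Or.inl hb
      · refine Or.inr ?_
        push_neg at hb
        have habs := abs_le.mp hb
        have hlow : μ0 ^ 2 / 4 * (c : ℝ) ≤
            RSS0 μ0 c (fun i => Z i ω) - ∑ i ∈ Finset.Icc 1 (2 * c), (Z i ω) ^ 2 := by
          have h1 : μ0 ^ 2 / 4 ≤ (RSS0 μ0 c (fun i => Z i ω) -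
              ∑ i ∈ Finset.Icc 1 (2 * c), (Z i ω) ^ 2) / (c : ℝ) := by linarith [habs.1]
          calc μ0 ^ 2 / 4 * (c : ℝ)
              ≤ ((RSS0 μ0 c (fun i => Z i ω) -
                  ∑ i ∈ Finset.Icc 1 (2 * c), (Z i ω) ^ 2) / (c : ℝ)) * (c : ℝ) :=
                mul_le_mul_of_nonneg_right h1 hcpos'.le
          _ = RSS0 μ0 c (fun i => Z i ω) -
                ∑ i ∈ Finset.Icc 1 (2 * c), (Z i ω) ^ 2 := by field_simp
        have hr1 := rss1_eq hcpos (fun i => Z i ω)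
        have hdiff : RSS0 μ0 c (fun i => Z i ω) - RSS1 c (fun i => Z i ω)
            = (RSS0 μ0 c (fun i => Z i ω) -
                ∑ i ∈ Finset.Icc 1 (2 * c), (Z i ω) ^ 2)
              + (∑ i ∈ Finset.Icc 1 c, Z i ω) ^ 2 / (c : ℝ)
              + (∑ i ∈ Finset.Ioc c (2 * c), Z i ω) ^ 2 / (c : ℝ) := by
          rw [hr1]; ring
        have hn1 : (0:ℝ) ≤ (∑ i ∈ Finset.Icc 1 c, Z i ω) ^ 2 / (c : ℝ) := by positivity
        have hn2 : (0:ℝ) ≤ (∑ i ∈ Finset.Ioc c (2 * c), Z i ω) ^ 2 / (c : ℝ) := by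
          positivity
        show K * Real.log n <
          RSS0 μ0 c (fun i => Z i ω) - RSS1 c (fun i => Z i ω)
        rw [hdiff]
        calc K * Real.log n < μ0 ^ 2 / 4 * (c : ℝ) := hK2
        _ ≤ _ := by linarith [hlow, hn1, hn2]
    have h1le : (1:ENNReal) ≤
        μm {ω | μ0 ^ 2 / 4 <
          |(RSS0 μ0 c (fun i => Z i ω) -
              ∑ i ∈ Finset.Icc 1 (2 * c), (Z i ω) ^ 2) / (c : ℝ) - μ0 ^ 2 / 2|} +
        μm {ω | K * Real.log n <
          RSS0 μ0 c (fun i => Z i ω) - RSS1 c (fun i => Z i ω)} := by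
      calc (1:ENNReal) = μm Set.univ := (measure_univ (μ := μm)).symm
      _ ≤ μm _ := measure_mono hcov
      _ ≤ _ := measure_union_le _ _
    exact tsub_le_iff_left.mpr h1le
  have hlow : Tendsto (fun n : ℕ =>
      1 - μm {ω | μ0 ^ 2 / 4 <
          |(RSS0 μ0 (cwin α n) (fun i => Z i ω) -
              ∑ i ∈ Finset.Icc 1 (2 * cwin α n), (Z i ω) ^ 2) / (cwin α n : ℝ) -
            μ0 ^ 2 / 2|}) atTop (nhds 1) := by
    have hcont : Continuous (fun x : ENNReal => 1 - x) :=
      ENNReal.continuous_sub_left ENNReal.one_ne_top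
    have := (hcont.tendsto 0).comp hbad
    simpa [Function.comp_def] using this
  exact tendsto_of_tendsto_of_tendsto_of_le_of_le' hlow tendsto_const_nhds hgoodlb
    (Eventually.of_forall fun n => prob_le_one)
end
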